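/- For a fixed integer s and all integers j, j', m, m' with j ≥ |s|, |m| ≤ j, j' ≥ |s|, |m'| ≤ j', the spin-weighted spherical harmonics of spin weight s are orthonormal on the sphere: ∫₀^{2π} ∫₀^{π} conj(ₛY_{jm}(θ,φ)) · ₛY_{j'm'}(θ,φ) · sin θ dθ dφ = δ_{jj'} δ_{mm'}. -/

import Mathlib

open scoped BigOperators

/-- The spin-weighted spherical harmonic `ₛY_{jm}(θ,φ)` of spin weight `s`, for integers
`s, j, m` (intended for `j ≥ |s|`; defined to be `0` when `|m| > j`), given by the
explicit Goldberg et al. formula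
`ₛY_{jm}(θ,φ) = [ (j+m)! (j−m)! (2j+1) / (4π (j+s)! (j−s)!) ]^{1/2} (sin(θ/2))^{2j}
  Σ_q C(j−s, q) C(j+s, q+s−m) (−1)^{j−q−s} e^{imφ} (cot(θ/2))^{2q+s−m}`,
the sum ranging over `max(0, m−s) ≤ q ≤ min(j−s, j+m)`. -/
noncomputable def swsh (s j m : ℤ) (θ φ : ℝ) : ℂ :=
  if |m| > j then 0 else
    (Real.sqrt ((((j + m).toNat.factorial : ℝ) * ((j - m).toNat.factorial : ℝ) *
          ((2 * j + 1 : ℤ) : ℝ)) /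
        (4 * Real.pi * ((j + s).toNat.factorial : ℝ) * ((j - s).toNat.factorial : ℝ))) : ℂ) *
      ((Real.sin (θ / 2) : ℂ) ^ (2 * j).toNat) *
      ∑ q ∈ Finset.Icc (max 0 (m - s)) (min (j - s) (j + m)),
        (((j - s).toNat.choose q.toNat : ℕ) : ℂ) *
          (((j + s).toNat.choose (q + s - m).toNat : ℕ) : ℂ) *
          (-1 : ℂ) ^ (j - q - s) *
          Complex.exp (Complex.I * (m : ℂ) * (φ : ℂ)) *
          ((Real.cos (θ / 2) / Real.sin (θ / 2) : ℝ) : ℂ) ^ (2 * q + s - m).toNat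

open scoped ComplexConjugate

open Finset Polynomial intervalIntegral MeasureTheory


lemma fd_lt (n : ℕ) (P : Polynomial ℝ) (hP : P.degree < n) :
    ∑ k ∈ range (n + 1), (-1 : ℝ) ^ k * (n.choose k) * P.eval (k : ℝ) = 0 := by
  induction n generalizing P with
  | zero =>
    have h0 : P = 0 := degree_eq_bot.mp (Nat.WithBot.lt_zero_iff.mp (by simpa using hP))
    simp [h0]
  | succ n ih =>
    have hX1 : (X + 1 : ℝ[X]) = X + Polynomial.C 1 := by rw [Polynomial.C_1]
    have hQ : (P - P.comp (X + 1)).degree < n := by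
      by_cases h0 : P.natDegree = 0
      · obtain ⟨c, rfl⟩ := Polynomial.natDegree_eq_zero.mp h0
        simp only [Polynomial.C_comp, sub_self, Polynomial.degree_zero]
        exact WithBot.bot_lt_coe _
      · have hP0 : P ≠ 0 := fun h => h0 (by simp [h])
        have hc0 : P.comp (X + 1) ≠ 0 := by
          intro h
          have h2 : (P.comp (X + 1)).comp (X - 1) = P := by
            rw [Polynomial.comp_assoc]
            simp
          rw [h] at h2
          simp at h2
          exact hP0 h2.symm
        have hdeg : P.degree = (P.comp (X + 1)).degree := by
          rw [Polynomial.degree_eq_natDegree hP0, Polynomial.degree_eq_natDegree hc0]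
          rw [Polynomial.natDegree_comp, hX1, Polynomial.natDegree_X_add_C, mul_one]
        have hlc : P.leadingCoeff = (P.comp (X + 1)).leadingCoeff := by
          rw [Polynomial.leadingCoeff_comp
            (by rw [hX1, Polynomial.natDegree_X_add_C]; exact one_ne_zero)]
          rw [hX1, Polynomial.leadingCoeff_X_add_C]
          simp
        have hlt := Polynomial.degree_sub_lt hdeg hP0 hlc
        have hn : P.natDegree < n + 1 :=
          (Polynomial.natDegree_lt_iff_degree_lt hP0).mpr (by exact_mod_cast hP)
        calc (P - P.comp (X+1)).degree < P.degree := hlt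
          _ = (P.natDegree : WithBot ℕ) := Polynomial.degree_eq_natDegree hP0
          _ ≤ (n : WithBot ℕ) := by exact_mod_cast Nat.lt_succ_iff.mp hn
    have ihQ := ih _ hQ
    simp only [Polynomial.eval_sub, Polynomial.eval_comp, Polynomial.eval_add, Polynomial.eval_X,
      Polynomial.eval_one] at ihQ
    rw [Finset.sum_range_succ'
      (f := fun k => (-1 : ℝ) ^ k * ((n+1).choose k) * P.eval (k : ℝ))]
    have key : ∀ i ∈ range (n + 1),
        (-1 : ℝ) ^ (i+1) * ((n+1).choose (i+1)) * P.eval ((i+1 : ℕ) : ℝ)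
        = (-1 : ℝ) ^ (i+1) * (n.choose (i+1)) * P.eval ((i+1 : ℕ) : ℝ)
          - (-1 : ℝ) ^ i * (n.choose i) * P.eval ((i : ℝ) + 1) := by
      intro i _
      rw [Nat.choose_succ_succ, Nat.cast_add]
      push_cast [pow_succ]
      ring
    rw [Finset.sum_congr rfl key, Finset.sum_sub_distrib]
    have last0 : ∑ i ∈ range (n + 1),
        (-1 : ℝ) ^ (i+1) * (n.choose (i+1)) * P.eval ((i+1 : ℕ) : ℝ)
        + (-1:ℝ)^0 * (((n+1).choose 0 : ℕ) : ℝ) * P.eval ((0:ℕ):ℝ)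
        = ∑ k ∈ range (n + 1), (-1 : ℝ) ^ k * (n.choose k) * P.eval (k : ℝ) := by
      have h2 : ∑ k ∈ range (n + 2), (-1 : ℝ) ^ k * (n.choose k) * P.eval (k : ℝ)
          = ∑ k ∈ range (n + 1), (-1 : ℝ) ^ k * (n.choose k) * P.eval (k : ℝ) := by
        rw [Finset.sum_range_succ (n := n+1)]
        simp [Nat.choose_eq_zero_of_lt (Nat.lt_succ_self n)]
      rw [← h2, Finset.sum_range_succ'
        (f := fun k => (-1 : ℝ) ^ k * ((n).choose k) * P.eval (k : ℝ))]
      norm_num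
    have goal2 : ∑ k ∈ range (n + 1), (-1 : ℝ) ^ k * (n.choose k) * P.eval (k : ℝ)
        - ∑ i ∈ range (n + 1), (-1 : ℝ) ^ i * (n.choose i) * P.eval ((i : ℝ) + 1) = 0 := by
      rw [← ihQ, ← Finset.sum_sub_distrib]
      apply Finset.sum_congr rfl
      intro i _
      ring
    rw [← last0] at goal2
    linarith [goal2]

lemma prod_shift_factorial (w q : ℕ) :
    ∏ i ∈ range q, ((w : ℝ) + i + 1) = ((w + q).factorial : ℝ) / (w.factorial : ℝ) := by
  have hw : (w.factorial : ℝ) ≠ 0 := by exact_mod_cast w.factorial_ne_zero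
  induction q with
  | zero => simp [div_self hw]
  | succ q ih =>
    rw [Finset.prod_range_succ, ih]
    rw [show w + (q+1) = (w + q) + 1 by ring, Nat.factorial_succ]
    push_cast
    field_simp

lemma prod_desc_factorial (n : ℕ) : ∏ i ∈ range n, ((n : ℝ) - i) = (n.factorial : ℝ) := by
  induction n with
  | zero => simp
  | succ n ih =>
    rw [Finset.prod_range_succ' (f := fun i => (((n+1 : ℕ)) : ℝ) - (i : ℕ))]
    push_cast
    have h1 : ∀ i ∈ range n, ((n:ℝ) + 1 - ((i:ℝ) + 1)) = (n:ℝ) - i := fun i _ => by ring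
    rw [Finset.prod_congr rfl h1, ih, Nat.factorial_succ]
    push_cast
    ring

lemma fd_eq (n : ℕ) (P : Polynomial ℝ) (hP : P.degree ≤ n) :
    ∑ k ∈ range (n + 1), (-1 : ℝ) ^ k * (n.choose k) * P.eval (k : ℝ)
      = (-1) ^ n * (n.factorial : ℝ) * P.coeff n := by
  set c : ℝ := P.coeff n with hc
  set D : Polynomial ℝ := ∏ i ∈ range n, (X - Polynomial.C (i : ℝ)) with hD
  have hDdeg : D.degree = n := by
    rw [hD, Polynomial.degree_prod]
    have h1 : ∀ i ∈ range n, (X - Polynomial.C (i:ℝ)).degree = 1 :=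
      fun i _ => Polynomial.degree_X_sub_C _
    rw [Finset.sum_congr rfl h1]
    simp
  have hDn : D.natDegree = n := Polynomial.natDegree_eq_of_degree_eq_some hDdeg
  have hDmonic : D.Monic := monic_prod_of_monic _ _ (fun i _ => monic_X_sub_C _)
  have hDcoeff : D.coeff n = 1 := by
    have h := hDmonic.leadingCoeff
    rwa [Polynomial.leadingCoeff, hDn] at h
  have hDle : D.degree ≤ n := le_of_eq hDdeg
  have hCD : (Polynomial.C c * D).degree ≤ n := by
    calc (Polynomial.C c * D).degree ≤ (Polynomial.C c).degree + D.degree :=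
          Polynomial.degree_mul_le _ _
      _ ≤ 0 + n := add_le_add (Polynomial.degree_C_le) hDle
      _ = (n : WithBot ℕ) := by simp
  have hdiff : (P - Polynomial.C c * D).degree < n := by
    rw [Polynomial.degree_lt_iff_coeff_zero]
    intro m hm
    rcases eq_or_lt_of_le hm with h | h
    · subst h
      simp [Polynomial.coeff_sub, Polynomial.coeff_C_mul, hDcoeff, hc]
    · rw [Polynomial.coeff_sub, Polynomial.coeff_eq_zero_of_degree_lt,
        Polynomial.coeff_eq_zero_of_degree_lt, sub_zero]
      · exact lt_of_le_of_lt hCD (by exact_mod_cast h)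
      · exact lt_of_le_of_lt hP (by exact_mod_cast h)
  have h1 := fd_lt n (P - Polynomial.C c * D) hdiff
  simp only [Polynomial.eval_sub, Polynomial.eval_mul, Polynomial.eval_C] at h1
  have hsplit : ∑ k ∈ range (n + 1), (-1 : ℝ) ^ k * (n.choose k) * P.eval (k : ℝ)
      = ∑ k ∈ range (n + 1), (-1 : ℝ) ^ k * (n.choose k) * (c * D.eval (k : ℝ)) := by
    have h2 : ∑ k ∈ range (n + 1), ((-1 : ℝ) ^ k * (n.choose k) * P.eval (k : ℝ)
        - (-1 : ℝ) ^ k * (n.choose k) * (c * D.eval (k : ℝ))) = 0 := by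
      rw [← h1]
      apply Finset.sum_congr rfl
      intro i _
      ring
    rw [Finset.sum_sub_distrib] at h2
    exact sub_eq_zero.mp h2
  rw [hsplit]
  have hDeval : ∀ k ∈ range (n + 1), k ≠ n → D.eval (k : ℝ) = 0 := by
    intro k hk hkn
    rw [hD, Polynomial.eval_prod]
    apply Finset.prod_eq_zero (i := k)
    · exact Finset.mem_range.mpr (lt_of_le_of_ne (Nat.lt_succ_iff.mp (Finset.mem_range.mp hk)) hkn)
    · simp
  have hDn_eval : D.eval (n : ℝ) = n.factorial := by
    rw [hD, Polynomial.eval_prod]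
    have h1 : ∀ i ∈ range n, ((X - Polynomial.C (i:ℝ)).eval (n:ℝ)) = (n:ℝ) - i := by
      intro i _; simp
    rw [Finset.prod_congr rfl h1]
    exact prod_desc_factorial n
  rw [Finset.sum_eq_single n]
  · rw [hDn_eval, Nat.choose_self]; push_cast; ring
  · intro k hk hkn
    rw [hDeval k hk hkn]
    ring
  · intro h
    exact absurd (Finset.self_mem_range_succ n) h



lemma beta_nat (B A : ℕ) : ∫ x in (0:ℝ)..1, x^A * (1-x)^B
    = (A.factorial * B.factorial : ℝ) / ((A+B+1).factorial : ℝ) := by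
  induction B generalizing A with
  | zero =>
    simp only [pow_zero, mul_one, integral_pow, Nat.factorial_zero]
    rw [one_pow, zero_pow (by omega), sub_zero]
    rw [Nat.factorial_succ]
    push_cast
    rw [eq_div_iff (by positivity)]
    field_simp
  | succ B ih =>
    have hu : ∀ x ∈ Set.uIcc (0:ℝ) 1, HasDerivAt (fun x : ℝ => (1-x)^(B+1))
        (-(B+1) * (1-x)^B) x := by
      intro x _
      have h1 : HasDerivAt (fun x : ℝ => 1 - x) (-1) x := by
        simpa using (hasDerivAt_id x).const_sub 1
      have := h1.pow (B+1)
      refine this.congr_deriv ?_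
      push_cast
      ring
    have hv : ∀ x ∈ Set.uIcc (0:ℝ) 1, HasDerivAt (fun x : ℝ => x^(A+1) / (A+1))
        (x^A) x := by
      intro x _
      have h1 := (hasDerivAt_pow (A+1) x).div_const ((A:ℝ)+1)
      refine h1.congr_deriv ?_
      push_cast
      field_simp
    have hparts := integral_mul_deriv_eq_deriv_mul hu hv
      (Continuous.intervalIntegrable (by continuity) _ _)
      (Continuous.intervalIntegrable (by continuity) _ _)
    simp only [sub_self, zero_pow (Nat.succ_ne_zero B), one_pow, sub_zero, zero_div,
      zero_mul, mul_zero, zero_sub, sub_zero] at hparts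
    have hLHS : ∫ x in (0:ℝ)..1, x^A * (1-x)^(B+1)
        = ∫ x in (0:ℝ)..1, (1-x)^(B+1) * x^A := by
      apply integral_congr; intro x _; ring
    rw [hLHS, hparts]
    have hRHS : ∫ x in (0:ℝ)..1, -(B+1:ℝ) * (1-x)^B * (x^(A+1)/(A+1))
        = (-(B+1:ℝ)/(A+1)) * ∫ x in (0:ℝ)..1, x^(A+1) * (1-x)^B := by
      rw [← intervalIntegral.integral_const_mul]
      apply integral_congr; intro x _
      field_simp
    rw [hRHS, ih (A+1)]
    have h1 : ((A+1) + B + 1) = (A + (B+1) + 1) := by ring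
    rw [h1]
    have hf : ((A + (B+1) + 1).factorial : ℝ) ≠ 0 := by exact_mod_cast Nat.factorial_ne_zero _
    rw [Nat.factorial_succ (A), Nat.factorial_succ (B)]
    push_cast
    field_simp
    ring

lemma theta_integral (A B : ℕ) :
    ∫ θ in (0:ℝ)..Real.pi, (Real.sin (θ/2))^(2*A) * (Real.cos (θ/2))^(2*B) * Real.sin θ
    = 2 * ((A.factorial * B.factorial : ℝ) / ((A+B+1).factorial : ℝ)) := by
  have key : ∫ θ in (0:ℝ)..Real.pi,
      (Real.sin (θ/2) * Real.cos (θ/2)) • ((fun x : ℝ => x^A * (1-x)^B) ∘ (fun θ => (Real.sin (θ/2))^2)) θ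
      = ∫ x in ((Real.sin ((0:ℝ)/2))^2)..((Real.sin (Real.pi/2))^2), x^A * (1-x)^B := by
    apply integral_comp_smul_deriv
    · intro θ _
      have h1 : HasDerivAt (fun θ : ℝ => Real.sin (θ/2)) (Real.cos (θ/2) * (1/2)) θ := by
        have := (Real.hasDerivAt_sin (θ/2)).comp θ ((hasDerivAt_id θ).div_const 2)
        simpa [Function.comp_def] using this
      have h2 := h1.pow 2
      refine h2.congr_deriv ?_
      ring
    · exact (Continuous.continuousOn (by continuity))
    · continuity
  simp only [Real.sin_pi_div_two, zero_div, Real.sin_zero] at key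
  rw [one_pow, zero_pow (by norm_num), beta_nat] at key
  have hcongr : ∫ θ in (0:ℝ)..Real.pi, (Real.sin (θ/2))^(2*A) * (Real.cos (θ/2))^(2*B) * Real.sin θ
      = ∫ θ in (0:ℝ)..Real.pi, 2 * ((Real.sin (θ/2) * Real.cos (θ/2)) •
          ((fun x : ℝ => x^A * (1-x)^B) ∘ (fun θ => (Real.sin (θ/2))^2)) θ) := by
    apply integral_congr
    intro θ _
    have hsin : Real.sin θ = 2 * Real.sin (θ/2) * Real.cos (θ/2) := by
      rw [show θ = 2 * (θ/2) by ring, Real.sin_two_mul]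
      ring_nf
    have hcos : 1 - (Real.sin (θ/2))^2 = (Real.cos (θ/2))^2 := by
      rw [← Real.sin_sq_add_cos_sq (θ/2)]; ring
    simp only [smul_eq_mul, Function.comp_apply]
    rw [hcos, hsin]
    rw [← pow_mul, ← pow_mul]
    ring
  rw [hcongr, intervalIntegral.integral_const_mul, key]



noncomputable def innerPoly (a' c' d' q u : ℕ) : Polynomial ℝ :=
  (∏ i ∈ range q, (X + Polynomial.C ((c' : ℝ) - a' + i + 1))) *
  (∏ i ∈ range u, (Polynomial.C ((d' : ℝ) + i + 1) - X))

lemma innerPoly_degree (a' c' d' q u : ℕ) : (innerPoly a' c' d' q u).degree = (q + u : ℕ) := by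
  rw [innerPoly, Polynomial.degree_mul, Polynomial.degree_prod, Polynomial.degree_prod]
  have h1 : ∀ i ∈ range q, (X + Polynomial.C ((c' : ℝ) - a' + i + 1)).degree = 1 :=
    fun i _ => Polynomial.degree_X_add_C _
  have h2 : ∀ i ∈ range u, (Polynomial.C ((d' : ℝ) + i + 1) - X).degree = 1 := by
    intro i _
    rw [show (Polynomial.C ((d' : ℝ) + i + 1) - X) = -(X - Polynomial.C ((d' : ℝ) + i + 1)) by ring,
      Polynomial.degree_neg, Polynomial.degree_X_sub_C]
  rw [Finset.sum_congr rfl h1, Finset.sum_congr rfl h2]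
  simp

lemma innerPoly_coeff (a' c' d' q u : ℕ) :
    (innerPoly a' c' d' q u).coeff (q + u) = (-1 : ℝ)^u := by
  have hdeg := innerPoly_degree a' c' d' q u
  have hn : (innerPoly a' c' d' q u).natDegree = q + u :=
    Polynomial.natDegree_eq_of_degree_eq_some hdeg
  have hlc : (innerPoly a' c' d' q u).leadingCoeff = (-1 : ℝ)^u := by
    rw [innerPoly, Polynomial.leadingCoeff_mul, Polynomial.leadingCoeff_prod,
      Polynomial.leadingCoeff_prod]
    have h1 : ∀ i ∈ range q, (X + Polynomial.C ((c' : ℝ) - a' + i + 1)).leadingCoeff = 1 :=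
      fun i _ => Polynomial.monic_X_add_C _
    have h2 : ∀ i ∈ range u, (Polynomial.C ((d' : ℝ) + i + 1) - X).leadingCoeff = -1 := by
      intro i _
      rw [show (Polynomial.C ((d' : ℝ) + i + 1) - X) = -(X - Polynomial.C ((d' : ℝ) + i + 1))
        by ring, Polynomial.leadingCoeff_neg, Polynomial.Monic.leadingCoeff (monic_X_sub_C _)]
    rw [Finset.prod_congr rfl h1, Finset.prod_congr rfl h2]
    simp
  rw [← hn, ← hlc]
  rfl

lemma innerPoly_eval_zero_lo (a' c' d' q u k : ℕ) (he : ∃ e : ℕ, e + a' = q + c')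
    (hk : k < a' - c') : (innerPoly a' c' d' q u).eval (k : ℝ) = 0 := by
  obtain ⟨e, he⟩ := he
  rw [innerPoly, Polynomial.eval_mul, Polynomial.eval_prod]
  apply mul_eq_zero_of_left
  apply Finset.prod_eq_zero (i := a' - c' - k - 1)
  · apply Finset.mem_range.mpr
    omega
  · simp only [Polynomial.eval_add, Polynomial.eval_X, Polynomial.eval_C]
    have hcast : ((a' - c' - k - 1 : ℕ) : ℝ) = (a' : ℝ) - c' - k - 1 := by
      have h : a' - c' - k - 1 + (c' + (k + 1)) = a' := by omega
      have h2 := congrArg (Nat.cast : ℕ → ℝ) h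
      push_cast at h2
      linarith
    rw [hcast]
    ring

lemma innerPoly_eval_zero_hi (a' c' d' q u k : ℕ) (h1 : a' ≤ u + d')
    (hk : d' < k) (hk2 : k ≤ a') : (innerPoly a' c' d' q u).eval (k : ℝ) = 0 := by
  rw [innerPoly, Polynomial.eval_mul, Polynomial.eval_prod, Polynomial.eval_prod]
  apply mul_eq_zero_of_right
  apply Finset.prod_eq_zero (i := k - d' - 1)
  · apply Finset.mem_range.mpr
    omega
  · simp only [Polynomial.eval_sub, Polynomial.eval_X, Polynomial.eval_C]
    have hcast : ((k - d' - 1 : ℕ) : ℝ) = (k : ℝ) - d' - 1 := by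
      have h : k - d' - 1 + (d' + 1) = k := by omega
      have h2 := congrArg (Nat.cast : ℕ → ℝ) h
      push_cast at h2
      linarith
    rw [hcast]
    ring

lemma inner_sum_eq (a' c' d' q u e : ℕ) (h1 : a' ≤ u + d') (he : e + a' = q + c') :
    ∑ q' ∈ Finset.Icc (a' - c') (min d' a'),
      (-1:ℝ)^q' * (d'.choose q') * (c'.choose (q' + c' - a')) *
        ((u + (d' - q')).factorial : ℝ) * ((e + q').factorial : ℝ)
    = ((d'.factorial : ℝ) * (c'.factorial : ℝ) / (a'.factorial : ℝ)) *
      ∑ k ∈ range (a'+1), (-1:ℝ)^k * (a'.choose k) * (innerPoly a' c' d' q u).eval (k : ℝ) := by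
  have hsub : Finset.Icc (a' - c') (min d' a') ⊆ range (a'+1) := by
    intro x hx
    simp only [Finset.mem_Icc, Finset.mem_range] at hx ⊢
    omega
  have hvanish : ∀ x ∈ range (a'+1), x ∉ Finset.Icc (a' - c') (min d' a') →
      (-1:ℝ)^x * (a'.choose x) * (innerPoly a' c' d' q u).eval (x : ℝ) = 0 := by
    intro k hk hknot
    simp only [Finset.mem_range] at hk
    simp only [Finset.mem_Icc, not_and_or, not_le] at hknot
    have hz : (innerPoly a' c' d' q u).eval (k : ℝ) = 0 := by
      rcases hknot with h | h
      · exact innerPoly_eval_zero_lo a' c' d' q u k ⟨e, he⟩ h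
      · exact innerPoly_eval_zero_hi a' c' d' q u k h1 (by omega) (by omega)
    rw [hz, mul_zero]
  rw [Finset.mul_sum, ← Finset.sum_subset hsub (fun x hx hxn => by rw [hvanish x hx hxn, mul_zero])]
  apply Finset.sum_congr rfl
  intro q' hq'
  simp only [Finset.mem_Icc] at hq'
  obtain ⟨hlo, hhi⟩ := hq'
  have hq'd : q' ≤ d' := le_trans hhi (min_le_left _ _)
  have hq'a : q' ≤ a' := le_trans hhi (min_le_right _ _)
  have hq'c : a' ≤ q' + c' := by omega
  set w : ℕ := q' + c' - a' with hw
  set z : ℕ := d' - q' with hz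
  have heval : (innerPoly a' c' d' q u).eval (q' : ℝ)
      = ((e + q').factorial : ℝ) / (w.factorial : ℝ)
        * (((u + z).factorial : ℝ) / (z.factorial : ℝ)) := by
    rw [innerPoly, Polynomial.eval_mul, Polynomial.eval_prod, Polynomial.eval_prod]
    have e1 : ∀ i ∈ range q, (X + Polynomial.C ((c' : ℝ) - a' + i + 1)).eval (q' : ℝ)
        = (w : ℝ) + i + 1 := by
      intro i _
      simp only [Polynomial.eval_add, Polynomial.eval_X, Polynomial.eval_C]
      have hcast : (w : ℝ) = (q' : ℝ) + c' - a' := by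
        have h : w + a' = q' + c' := by omega
        have h2 := congrArg (Nat.cast : ℕ → ℝ) h
        push_cast at h2
        linarith
      rw [hcast]
      ring
    have e2 : ∀ i ∈ range u, (Polynomial.C ((d' : ℝ) + i + 1) - X).eval (q' : ℝ)
        = (z : ℝ) + i + 1 := by
      intro i _
      simp only [Polynomial.eval_sub, Polynomial.eval_X, Polynomial.eval_C]
      have hcast : (z : ℝ) = (d' : ℝ) - q' := by
        have h : z + q' = d' := by omega
        have h2 := congrArg (Nat.cast : ℕ → ℝ) h
        push_cast at h2
        linarith
      rw [hcast]
      ring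
    rw [Finset.prod_congr rfl e1, Finset.prod_congr rfl e2,
      prod_shift_factorial, prod_shift_factorial]
    have hwq : w + q = e + q' := by omega
    have huz : z + u = u + z := by omega
    rw [hwq, huz]
  rw [heval]
  rw [Nat.cast_choose ℝ hq'd, Nat.cast_choose ℝ (show w ≤ c' by omega),
    Nat.cast_choose ℝ hq'a]
  have hcw : c' - w = a' - q' := by omega
  rw [hcw]
  have hdz : d' - q' = z := rfl
  rw [hdz]
  have f1 : (q'.factorial : ℝ) ≠ 0 := by exact_mod_cast (Nat.factorial_ne_zero _)
  have f2 : (z.factorial : ℝ) ≠ 0 := by exact_mod_cast (Nat.factorial_ne_zero _)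
  have f3 : (w.factorial : ℝ) ≠ 0 := by exact_mod_cast (Nat.factorial_ne_zero _)
  have f4 : ((a' - q').factorial : ℝ) ≠ 0 := by exact_mod_cast (Nat.factorial_ne_zero _)
  have f5 : (a'.factorial : ℝ) ≠ 0 := by exact_mod_cast (Nat.factorial_ne_zero _)
  field_simp

lemma inner_lt (a' c' d' q u e : ℕ) (h1 : a' ≤ u + d') (he : e + a' = q + c')
    (h2 : q + u < a') :
    ∑ q' ∈ Finset.Icc (a' - c') (min d' a'),
      (-1:ℝ)^q' * (d'.choose q') * (c'.choose (q' + c' - a')) *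
        ((u + (d' - q')).factorial : ℝ) * ((e + q').factorial : ℝ) = 0 := by
  rw [inner_sum_eq a' c' d' q u e h1 he]
  rw [fd_lt a' _ (by rw [innerPoly_degree]; exact_mod_cast WithBot.coe_lt_coe.mpr h2)]
  ring

lemma inner_eq (a' c' d' q u e : ℕ) (h1 : a' ≤ u + d') (he : e + a' = q + c')
    (h2 : q + u = a') :
    ∑ q' ∈ Finset.Icc (a' - c') (min d' a'),
      (-1:ℝ)^q' * (d'.choose q') * (c'.choose (q' + c' - a')) *
        ((u + (d' - q')).factorial : ℝ) * ((e + q').factorial : ℝ)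
    = (-1:ℝ)^q * (d'.factorial : ℝ) * (c'.factorial : ℝ) := by
  rw [inner_sum_eq a' c' d' q u e h1 he]
  rw [fd_eq a' _ (by rw [innerPoly_degree, h2])]
  rw [← h2, innerPoly_coeff]
  have f5 : ((q+u).factorial : ℝ) ≠ 0 := by exact_mod_cast (Nat.factorial_ne_zero _)
  have hpow : (-1:ℝ)^(q+u) * (-1)^u = (-1)^q := by
    rw [pow_add, mul_assoc, ← pow_add, show u + u = 2*u by ring, pow_mul]
    norm_num
  field_simp
  exact hpow



noncomputable def Vsum (a c d a' c' d' : ℕ) : ℝ :=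
  ∑ q ∈ Finset.Icc (a - c) (min d a), ∑ q' ∈ Finset.Icc (a' - c') (min d' a'),
    (-1:ℝ)^(q+q') * (d.choose q) * (c.choose (q + c - a)) *
      (d'.choose q') * (c'.choose (q' + c' - a')) *
      (((a - q) + (d' - q')).factorial : ℝ) * (((q + c - a) + q').factorial : ℝ)

lemma Vsum_off (a c d a' c' d' : ℕ) (hca : c + a' = c' + a) (had : a + d' = a' + d)
    (hlt : a < a') : Vsum a c d a' c' d' = 0 := by
  rw [Vsum]
  apply Finset.sum_eq_zero
  intro q hq
  simp only [Finset.mem_Icc] at hq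
  obtain ⟨hlo, hhi⟩ := hq
  have hqd : q ≤ d := le_trans hhi (min_le_left _ _)
  have hqa : q ≤ a := le_trans hhi (min_le_right _ _)
  set u : ℕ := a - q with hu
  set e : ℕ := q + c - a with he'
  have key := inner_lt a' c' d' q u e (by omega) (by omega) (by omega)
  calc ∑ q' ∈ Finset.Icc (a' - c') (min d' a'),
        (-1:ℝ)^(q+q') * (d.choose q) * (c.choose (q + c - a)) *
          (d'.choose q') * (c'.choose (q' + c' - a')) *
          (((a - q) + (d' - q')).factorial : ℝ) * (((q + c - a) + q').factorial : ℝ)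
      = ((-1:ℝ)^q * (d.choose q) * (c.choose e)) *
        ∑ q' ∈ Finset.Icc (a' - c') (min d' a'),
          (-1:ℝ)^q' * (d'.choose q') * (c'.choose (q' + c' - a')) *
            ((u + (d' - q')).factorial : ℝ) * ((e + q').factorial : ℝ) := by
        rw [Finset.mul_sum]
        apply Finset.sum_congr rfl
        intro q' _
        rw [pow_add]
        ring
    _ = 0 := by rw [key, mul_zero]

lemma Vsum_symm (a c d a' c' d' : ℕ) (hca : c + a' = c' + a) (had : a + d' = a' + d) :
    Vsum a c d a' c' d' = Vsum a' c' d' a c d := by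
  rw [Vsum, Vsum, Finset.sum_comm]
  apply Finset.sum_congr rfl
  intro q' hq'
  apply Finset.sum_congr rfl
  intro q hq
  simp only [Finset.mem_Icc] at hq hq'
  have h1 : (a - q) + (d' - q') = (a' - q') + (d - q) := by omega
  have h2 : (q + c - a) + q' = (q' + c' - a') + q := by omega
  rw [h1, h2, show q + q' = q' + q by omega]
  ring

lemma vandermonde_icc (a c d : ℕ) :
    ∑ q ∈ Finset.Icc (a - c) (min d a), ((d.choose q : ℝ) * (c.choose (q + c - a)))
      = ((d + c).choose a : ℝ) := by
  have hnat : ∑ q ∈ Finset.Icc (a - c) (min d a), (d.choose q) * (c.choose (q + c - a))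
      = (d + c).choose a := by
    have hsub : Finset.Icc (a - c) (min d a) ⊆ Finset.range (a+1) := by
      intro x hx
      simp only [Finset.mem_Icc] at hx
      have := le_trans hx.2 (min_le_right d a)
      exact Finset.mem_range.mpr (by omega)
    have hvan : ∀ x ∈ Finset.range (a+1), x ∉ Finset.Icc (a - c) (min d a) →
        (d.choose x) * (c.choose (a - x)) = 0 := by
      intro x hx hxn
      simp only [Finset.mem_range] at hx
      simp only [Finset.mem_Icc, not_and_or, not_le] at hxn
      rcases hxn with h | h
      · have h2 : c < a - x := by omega
        rw [Nat.choose_eq_zero_of_lt h2, mul_zero]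
      · have h3 : d < x := by
          rcases le_or_gt d a with hda | hda
          · have : min d a = d := min_eq_left hda
            omega
          · have : min d a = a := min_eq_right (le_of_lt hda)
            omega
        rw [Nat.choose_eq_zero_of_lt h3, zero_mul]
    have hstep : ∑ q ∈ Finset.Icc (a - c) (min d a), (d.choose q) * (c.choose (a - q))
        = ∑ q ∈ Finset.range (a+1), (d.choose q) * (c.choose (a - q)) :=
      Finset.sum_subset hsub hvan
    have hcongr : ∑ q ∈ Finset.Icc (a - c) (min d a), (d.choose q) * (c.choose (q + c - a))
        = ∑ q ∈ Finset.Icc (a - c) (min d a), (d.choose q) * (c.choose (a - q)) := by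
      apply Finset.sum_congr rfl
      intro q hq
      simp only [Finset.mem_Icc] at hq
      have h1 : a - q ≤ c := by omega
      have h2 : q + c - a = c - (a - q) := by omega
      rw [h2, Nat.choose_symm h1]
    rw [hcongr, hstep, Nat.add_choose_eq, Finset.Nat.sum_antidiagonal_eq_sum_range_succ_mk]
  exact_mod_cast hnat

lemma Vsum_diag (a c d : ℕ) :
    Vsum a c d a c d = (d.factorial : ℝ) * (c.factorial : ℝ) * ((d + c).choose a : ℝ) := by
  rw [Vsum]
  have key : ∀ q ∈ Finset.Icc (a - c) (min d a),
      ∑ q' ∈ Finset.Icc (a - c) (min d a),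
        (-1:ℝ)^(q+q') * (d.choose q) * (c.choose (q + c - a)) *
          (d.choose q') * (c.choose (q' + c - a)) *
          (((a - q) + (d - q')).factorial : ℝ) * (((q + c - a) + q').factorial : ℝ)
      = ((d.choose q : ℝ) * (c.choose (q + c - a))) * ((d.factorial : ℝ) * (c.factorial : ℝ)) := by
    intro q hq
    simp only [Finset.mem_Icc] at hq
    obtain ⟨hlo, hhi⟩ := hq
    have hqd : q ≤ d := le_trans hhi (min_le_left _ _)
    have hqa : q ≤ a := le_trans hhi (min_le_right _ _)
    set u : ℕ := a - q with hu
    set e : ℕ := q + c - a with he'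
    have key := inner_eq a c d q u e (by omega) (by omega) (by omega)
    calc ∑ q' ∈ Finset.Icc (a - c) (min d a),
        (-1:ℝ)^(q+q') * (d.choose q) * (c.choose (q + c - a)) *
          (d.choose q') * (c.choose (q' + c - a)) *
          (((a - q) + (d - q')).factorial : ℝ) * (((q + c - a) + q').factorial : ℝ)
        = ((-1:ℝ)^q * (d.choose q) * (c.choose e)) *
          ∑ q' ∈ Finset.Icc (a - c) (min d a),
            (-1:ℝ)^q' * (d.choose q') * (c.choose (q' + c - a)) *
              ((u + (d - q')).factorial : ℝ) * ((e + q').factorial : ℝ) := by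
          rw [Finset.mul_sum]
          apply Finset.sum_congr rfl
          intro q' _
          rw [pow_add]
          ring
      _ = ((-1:ℝ)^q * (d.choose q) * (c.choose e)) *
            ((-1:ℝ)^q * (d.factorial : ℝ) * (c.factorial : ℝ)) := by rw [key]
      _ = ((-1:ℝ)^q * (-1:ℝ)^q) * ((d.choose q : ℝ) * (c.choose e)) *
            ((d.factorial : ℝ) * (c.factorial : ℝ)) := by ring
      _ = ((d.choose q : ℝ) * (c.choose e)) * ((d.factorial : ℝ) * (c.factorial : ℝ)) := by
          rw [← pow_add, show q + q = 2*q by ring, pow_mul]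
          norm_num
  rw [Finset.sum_congr rfl key, ← Finset.sum_mul, vandermonde_icc]
  ring




/-! ### real form of the harmonic -/

noncomputable def Nc (a c d : ℕ) : ℝ :=
  Real.sqrt (((a.factorial : ℝ) * ((c + d - a).factorial : ℝ) * ((c + d + 1 : ℕ) : ℝ)) /
    (4 * Real.pi * (c.factorial : ℝ) * (d.factorial : ℝ)))

noncomputable def Wnat (a c d : ℕ) (θ : ℝ) : ℝ :=
  Nc a c d * Real.sin (θ/2) ^ (c + d) *
  ∑ n ∈ Finset.Icc (a - c) (min d a),
    (d.choose n : ℝ) * (c.choose (n + c - a) : ℝ) * ((-1:ℝ)^d * (-1:ℝ)^n) *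
      (Real.cos (θ/2) / Real.sin (θ/2)) ^ (n + (n + c - a))

lemma neg_one_zpow_nat_sub (d : ℕ) (n : ℕ) :
    (-1 : ℝ) ^ ((d : ℤ) - (n : ℕ)) = (-1:ℝ)^d * (-1:ℝ)^n := by
  rw [sub_eq_add_neg, zpow_add₀ (by norm_num : (-1:ℝ) ≠ 0), zpow_natCast, zpow_neg,
    zpow_natCast, ← inv_pow]
  norm_num

lemma sum_Icc_toNat {M : Type*} [AddCommMonoid M] (f : ℤ → M) (lo hi : ℤ) (h0 : 0 ≤ lo) (h1 : 0 ≤ hi) :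
    ∑ q ∈ Finset.Icc lo hi, f q = ∑ n ∈ Finset.Icc lo.toNat hi.toNat, f (n : ℤ) := by
  refine Finset.sum_nbij' (fun q => q.toNat) (fun n => (n : ℤ)) ?_ ?_ ?_ ?_ ?_
  · intro q hq
    simp only [Finset.mem_Icc] at hq ⊢
    omega
  · intro n hn
    simp only [Finset.mem_Icc] at hn ⊢
    omega
  · intro q hq
    simp only [Finset.mem_Icc] at hq
    omega
  · intro n _
    omega
  · intro q hq
    simp only [Finset.mem_Icc] at hq
    congr 1
    omega

/-- `swsh` splits as a real function of `θ` times `exp(imφ)`. -/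
lemma swsh_split (s j m : ℤ) (hj : |s| ≤ j) (hm : |m| ≤ j) (θ φ : ℝ)
    (a c d : ℕ) (ha : (a : ℤ) = j + m) (hc : (c : ℤ) = j + s) (hd : (d : ℤ) = j - s) :
    swsh s j m θ φ = ((Wnat a c d θ : ℝ) : ℂ) * Complex.exp (Complex.I * m * φ) := by
  have habs := abs_le.mp hm
  have habs' := abs_le.mp hj
  rw [swsh, if_neg (not_lt.mpr hm)]
  have hb : (j - m).toNat = c + d - a := by omega
  have h2j : (2 * j).toNat = c + d := by omega
  have h2j1 : ((2 * j + 1 : ℤ) : ℝ) = ((c + d + 1 : ℕ) : ℝ) := by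
    have : (2 * j + 1 : ℤ) = ((c + d + 1 : ℕ) : ℤ) := by omega
    rw [this]
    push_cast
    ring
  have hja : (j + m).toNat = a := by omega
  have hjc : (j + s).toNat = c := by omega
  have hjd : (j - s).toNat = d := by omega
  rw [hb, h2j, h2j1, hja, hjc, hjd]
  have hsum : ∑ q ∈ Finset.Icc (max 0 (m - s)) (min (j - s) (j + m)),
      ((d.choose q.toNat : ℕ) : ℂ) * ((c.choose (q + s - m).toNat : ℕ) : ℂ) *
        (-1 : ℂ) ^ (j - q - s) * Complex.exp (Complex.I * m * φ) *
        ((Real.cos (θ / 2) / Real.sin (θ / 2) : ℝ) : ℂ) ^ (2 * q + s - m).toNat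
      = (((∑ n ∈ Finset.Icc (a - c) (min d a),
          (d.choose n : ℝ) * (c.choose (n + c - a) : ℝ) * ((-1:ℝ)^d * (-1:ℝ)^n) *
            (Real.cos (θ/2) / Real.sin (θ/2)) ^ (n + (n + c - a)) : ℝ)) : ℂ) *
          Complex.exp (Complex.I * m * φ) := by
    rw [sum_Icc_toNat _ _ _ (le_max_left 0 (m - s)) (by omega)]
    have hLo : (max 0 (m - s)).toNat = a - c := by omega
    have hHi : (min (j - s) (j + m)).toNat = min d a := by omega
    rw [hLo, hHi, Complex.ofReal_sum, Finset.sum_mul]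
    apply Finset.sum_congr rfl
    intro n hn
    simp only [Finset.mem_Icc] at hn
    have e1 : ((n : ℤ)).toNat = n := by omega
    have e2 : ((n : ℤ) + s - m).toNat = n + c - a := by omega
    have e3 : (2 * (n : ℤ) + s - m).toNat = n + (n + c - a) := by omega
    have e4 : (j - (n : ℤ) - s) = ((d : ℤ) - (n : ℕ)) := by omega
    rw [e1, e2, e3, e4]
    have e5 : ((-1 : ℂ)) ^ ((d : ℤ) - (n : ℕ)) = (((((-1:ℝ)^d * (-1:ℝ)^n) : ℝ)) : ℂ) := by
      rw [show (-1:ℂ) = ((-1:ℝ):ℂ) by norm_num, ← Complex.ofReal_zpow, neg_one_zpow_nat_sub]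
    rw [e5]
    push_cast
    ring
  rw [hsum, Wnat, Nc]
  push_cast
  ring


lemma pow_div_identity (x y : ℝ) (hx : x ≠ 0) (A B E k : ℕ) (hE : E = 2*A + k) (hk : k = 2*B) :
    (y/x)^k * x^E = x^(2*A) * y^(2*B) := by
  subst hE hk
  rw [div_pow, pow_add]
  field_simp [pow_ne_zero]

lemma Wnat_mul_pointwise (a c d a' c' d' : ℕ) (hca : c + a' = c' + a) (had : a + d' = a' + d)
    (θ : ℝ) (hθ : Real.sin (θ/2) ≠ 0) :
    Wnat a c d θ * Wnat a' c' d' θ * Real.sin θ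
    = ∑ n ∈ Finset.Icc (a - c) (min d a), ∑ n' ∈ Finset.Icc (a' - c') (min d' a'),
        (Nc a c d * Nc a' c' d' * (-1:ℝ)^(d+d') *
          ((-1:ℝ)^(n+n') * (d.choose n) * (c.choose (n + c - a)) *
            (d'.choose n') * (c'.choose (n' + c' - a')))) *
        (Real.sin (θ/2) ^ (2*((a - n) + (d' - n'))) *
          Real.cos (θ/2) ^ (2*((n + c - a) + n')) * Real.sin θ) := by
  have h0 : Wnat a c d θ * Wnat a' c' d' θ * Real.sin θ
      = ((∑ n ∈ Finset.Icc (a - c) (min d a),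
          (d.choose n : ℝ) * (c.choose (n + c - a) : ℝ) * ((-1:ℝ)^d * (-1:ℝ)^n) *
            (Real.cos (θ/2) / Real.sin (θ/2)) ^ (n + (n + c - a))) *
        (∑ n' ∈ Finset.Icc (a' - c') (min d' a'),
          (d'.choose n' : ℝ) * (c'.choose (n' + c' - a') : ℝ) * ((-1:ℝ)^d' * (-1:ℝ)^n') *
            (Real.cos (θ/2) / Real.sin (θ/2)) ^ (n' + (n' + c' - a')))) *
        (Nc a c d * Nc a' c' d' * Real.sin (θ/2) ^ ((c + d) + (c' + d')) * Real.sin θ) := by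
    rw [Wnat, Wnat, pow_add]
    ring
  rw [h0, Finset.sum_mul_sum, Finset.sum_mul]
  apply Finset.sum_congr rfl
  intro n hn
  rw [Finset.sum_mul]
  apply Finset.sum_congr rfl
  intro n' hn'
  simp only [Finset.mem_Icc] at hn hn'
  have hnd : n ≤ d := le_trans hn.2 (min_le_left _ _)
  have hna : n ≤ a := le_trans hn.2 (min_le_right _ _)
  have hnd' : n' ≤ d' := le_trans hn'.2 (min_le_left _ _)
  have hna' : n' ≤ a' := le_trans hn'.2 (min_le_right _ _)
  have hk : (n + (n + c - a)) + (n' + (n' + c' - a')) = 2*((n + c - a) + n') := by omega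
  have hE : (c + d) + (c' + d') = 2*((a - n) + (d' - n'))
      + ((n + (n + c - a)) + (n' + (n' + c' - a'))) := by omega
  have key : (Real.cos (θ/2) / Real.sin (θ/2)) ^ (n + (n + c - a)) *
      (Real.cos (θ/2) / Real.sin (θ/2)) ^ (n' + (n' + c' - a')) *
      Real.sin (θ/2) ^ ((c + d) + (c' + d'))
      = Real.sin (θ/2) ^ (2*((a - n) + (d' - n'))) *
        Real.cos (θ/2) ^ (2*((n + c - a) + n')) := by
    rw [← pow_add, pow_div_identity _ _ hθ _ _ _ _ hE hk]
  calc (d.choose n : ℝ) * (c.choose (n + c - a) : ℝ) * ((-1:ℝ)^d * (-1:ℝ)^n) *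
        (Real.cos (θ/2) / Real.sin (θ/2)) ^ (n + (n + c - a)) *
        ((d'.choose n' : ℝ) * (c'.choose (n' + c' - a') : ℝ) * ((-1:ℝ)^d' * (-1:ℝ)^n') *
          (Real.cos (θ/2) / Real.sin (θ/2)) ^ (n' + (n' + c' - a'))) *
        (Nc a c d * Nc a' c' d' * Real.sin (θ/2) ^ ((c + d) + (c' + d')) * Real.sin θ)
      = ((-1:ℝ)^d * (-1:ℝ)^d') * ((-1:ℝ)^n * (-1:ℝ)^n') *
          ((d.choose n : ℝ) * (c.choose (n + c - a)) * (d'.choose n') * (c'.choose (n' + c' - a'))) *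
          (Nc a c d * Nc a' c' d') * Real.sin θ *
          ((Real.cos (θ/2) / Real.sin (θ/2)) ^ (n + (n + c - a)) *
            (Real.cos (θ/2) / Real.sin (θ/2)) ^ (n' + (n' + c' - a')) *
            Real.sin (θ/2) ^ ((c + d) + (c' + d'))) := by ring
    _ = _ := by
        rw [key, ← pow_add, ← pow_add]
        ring

lemma cont_term (A B : ℕ) :
    Continuous (fun θ : ℝ => Real.sin (θ/2) ^ A * Real.cos (θ/2) ^ B * Real.sin θ) := by
  have h1 : Continuous fun θ : ℝ => θ/2 := continuous_id.div_const 2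
  exact (((Real.continuous_sin.comp h1).pow A).mul
    ((Real.continuous_cos.comp h1).pow B)).mul Real.continuous_sin

lemma Kcalc (a c d a' c' d' : ℕ) (hca : c + a' = c' + a) (had : a + d' = a' + d) :
    ∫ θ in (0:ℝ)..Real.pi, Wnat a c d θ * Wnat a' c' d' θ * Real.sin θ
    = Nc a c d * Nc a' c' d' * (-1:ℝ)^(d+d') * (2 / ((c + d' + 1).factorial : ℝ)) *
      Vsum a c d a' c' d' := by
  have hstep1 : ∫ θ in (0:ℝ)..Real.pi, Wnat a c d θ * Wnat a' c' d' θ * Real.sin θ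
      = ∫ θ in (0:ℝ)..Real.pi, ∑ n ∈ Finset.Icc (a - c) (min d a),
          ∑ n' ∈ Finset.Icc (a' - c') (min d' a'),
          (Nc a c d * Nc a' c' d' * (-1:ℝ)^(d+d') *
            ((-1:ℝ)^(n+n') * (d.choose n) * (c.choose (n + c - a)) *
              (d'.choose n') * (c'.choose (n' + c' - a')))) *
          (Real.sin (θ/2) ^ (2*((a - n) + (d' - n'))) *
            Real.cos (θ/2) ^ (2*((n + c - a) + n')) * Real.sin θ) := by
    apply intervalIntegral.integral_congr_ae
    filter_upwards with θ hθmem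
    rw [Set.uIoc_of_le Real.pi_pos.le] at hθmem
    have hθ : Real.sin (θ/2) ≠ 0 := by
      apply ne_of_gt
      apply Real.sin_pos_of_pos_of_lt_pi
      · linarith [hθmem.1]
      · have := hθmem.2
        have := Real.pi_pos
        linarith
    exact Wnat_mul_pointwise a c d a' c' d' hca had θ hθ
  rw [hstep1]
  rw [intervalIntegral.integral_finset_sum (fun n _ => by
    apply Continuous.intervalIntegrable
    apply continuous_finset_sum
    intro n' _
    exact (continuous_const.mul (cont_term _ _)))]
  have hstep2 : ∀ n ∈ Finset.Icc (a - c) (min d a),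
      ∫ θ in (0:ℝ)..Real.pi, ∑ n' ∈ Finset.Icc (a' - c') (min d' a'),
          (Nc a c d * Nc a' c' d' * (-1:ℝ)^(d+d') *
            ((-1:ℝ)^(n+n') * (d.choose n) * (c.choose (n + c - a)) *
              (d'.choose n') * (c'.choose (n' + c' - a')))) *
          (Real.sin (θ/2) ^ (2*((a - n) + (d' - n'))) *
            Real.cos (θ/2) ^ (2*((n + c - a) + n')) * Real.sin θ)
      = ∑ n' ∈ Finset.Icc (a' - c') (min d' a'),
          (Nc a c d * Nc a' c' d' * (-1:ℝ)^(d+d') *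
            ((-1:ℝ)^(n+n') * (d.choose n) * (c.choose (n + c - a)) *
              (d'.choose n') * (c'.choose (n' + c' - a')))) *
          (2 * ((((a - n) + (d' - n')).factorial * (((n + c - a) + n').factorial) : ℝ) /
            ((((a - n) + (d' - n')) + ((n + c - a) + n') + 1).factorial : ℝ))) := by
    intro n hn
    rw [intervalIntegral.integral_finset_sum (fun n' _ => by
      exact (continuous_const.mul (cont_term _ _)).intervalIntegrable _ _)]
    apply Finset.sum_congr rfl
    intro n' hn'
    rw [intervalIntegral.integral_const_mul, theta_integral]
  rw [Finset.sum_congr rfl hstep2]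
  rw [Vsum, Finset.mul_sum]
  apply Finset.sum_congr rfl
  intro n hn
  rw [Finset.mul_sum]
  apply Finset.sum_congr rfl
  intro n' hn'
  simp only [Finset.mem_Icc] at hn hn'
  have hnd : n ≤ d := le_trans hn.2 (min_le_left _ _)
  have hna : n ≤ a := le_trans hn.2 (min_le_right _ _)
  have hnd' : n' ≤ d' := le_trans hn'.2 (min_le_left _ _)
  have hna' : n' ≤ a' := le_trans hn'.2 (min_le_right _ _)
  have hsum : ((a - n) + (d' - n')) + ((n + c - a) + n') + 1 = c + d' + 1 := by omega
  rw [hsum]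
  ring


lemma K_diag_value (a c d : ℕ) (ha : a ≤ c + d) :
    (Nc a c d * Nc a c d * (-1:ℝ)^(d+d) * (2 / ((c + d + 1).factorial : ℝ)) *
      ((d.factorial : ℝ) * c.factorial * ((d + c).choose a))) * (2 * Real.pi) = 1 := by
  rw [Nc, Real.mul_self_sqrt (by positivity)]
  rw [Even.neg_one_pow ⟨d, rfl⟩]
  rw [show d + c = c + d by ring, Nat.cast_choose ℝ (by omega : a ≤ c + d)]
  rw [Nat.factorial_succ (c+d)]
  have f1 : (a.factorial : ℝ) ≠ 0 := by exact_mod_cast Nat.factorial_ne_zero _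
  have f2 : (c.factorial : ℝ) ≠ 0 := by exact_mod_cast Nat.factorial_ne_zero _
  have f3 : (d.factorial : ℝ) ≠ 0 := by exact_mod_cast Nat.factorial_ne_zero _
  have f4 : ((c+d).factorial : ℝ) ≠ 0 := by exact_mod_cast Nat.factorial_ne_zero _
  have f5 : ((c+d-a).factorial : ℝ) ≠ 0 := by exact_mod_cast Nat.factorial_ne_zero _
  have f6 : Real.pi ≠ 0 := Real.pi_ne_zero
  have f7 : ((c:ℝ) + d + 1) ≠ 0 := by positivity
  push_cast
  field_simp
  ring


/-- Orthonormality of the spin-weighted spherical harmonics of fixed spin weight `s` on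
the sphere: `∫₀^{2π} ∫₀^{π} conj(ₛY_{jm}) ₛY_{j'm'} sinθ dθ dφ = δ_{jj'} δ_{mm'}`. -/
theorem swsh_orthonormal
    (s j m j' m' : ℤ) (hj : |s| ≤ j) (hm : |m| ≤ j) (hj' : |s| ≤ j') (hm' : |m'| ≤ j') :
    (∫ φ in (0 : ℝ)..(2 * Real.pi), ∫ θ in (0 : ℝ)..Real.pi,
        conj (swsh s j m θ φ) * swsh s j' m' θ φ * ((Real.sin θ : ℝ) : ℂ))
      = if j = j' ∧ m = m' then 1 else 0 := by

  have habs := abs_le.mp hm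
  have habs' := abs_le.mp hj
  have habs2 := abs_le.mp hm'
  have habs2' := abs_le.mp hj'
  have ha : (((j+m).toNat : ℕ) : ℤ) = j + m := Int.toNat_of_nonneg (by omega)
  have hc : (((j+s).toNat : ℕ) : ℤ) = j + s := Int.toNat_of_nonneg (by omega)
  have hd : (((j-s).toNat : ℕ) : ℤ) = j - s := Int.toNat_of_nonneg (by omega)
  have ha' : (((j'+m').toNat : ℕ) : ℤ) = j' + m' := Int.toNat_of_nonneg (by omega)
  have hc' : (((j'+s).toNat : ℕ) : ℤ) = j' + s := Int.toNat_of_nonneg (by omega)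
  have hd' : (((j'-s).toNat : ℕ) : ℤ) = j' - s := Int.toNat_of_nonneg (by omega)
  set a := (j+m).toNat
  set c := (j+s).toNat
  set d := (j-s).toNat
  set a' := (j'+m').toNat
  set c' := (j'+s).toNat
  set d' := (j'-s).toNat
  have hinner : ∀ φ : ℝ, (∫ θ in (0:ℝ)..Real.pi,
        conj (swsh s j m θ φ) * swsh s j' m' θ φ * ((Real.sin θ : ℝ) : ℂ))
      = ((∫ θ in (0:ℝ)..Real.pi, Wnat a c d θ * Wnat a' c' d' θ * Real.sin θ : ℝ) : ℂ)
          * Complex.exp (Complex.I * ((m' : ℂ) - (m : ℂ)) * φ) := by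
    intro φ
    have h1 : ∀ θ : ℝ, conj (swsh s j m θ φ) * swsh s j' m' θ φ * ((Real.sin θ : ℝ) : ℂ)
        = ((Wnat a c d θ * Wnat a' c' d' θ * Real.sin θ : ℝ) : ℂ)
            * Complex.exp (Complex.I * ((m' : ℂ) - (m : ℂ)) * φ) := by
      intro θ
      rw [swsh_split s j m hj hm θ φ a c d ha hc hd,
        swsh_split s j' m' hj' hm' θ φ a' c' d' ha' hc' hd']
      rw [map_mul, Complex.conj_ofReal, ← Complex.exp_conj]
      have hconj : (starRingEnd ℂ) (Complex.I * (m : ℂ) * (φ : ℝ)) = -(Complex.I * m * φ) := by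
        simp [map_mul, Complex.conj_I, Complex.conj_ofReal]
      rw [hconj]
      rw [show -(Complex.I * (m:ℂ) * (φ:ℝ)) = Complex.I * (-(m:ℂ)) * φ by ring]
      calc (Wnat a c d θ : ℂ) * Complex.exp (Complex.I * (-(m:ℂ)) * φ) *
            ((Wnat a' c' d' θ : ℂ) * Complex.exp (Complex.I * (m':ℂ) * φ)) *
            ((Real.sin θ : ℝ) : ℂ)
          = ((Wnat a c d θ * Wnat a' c' d' θ * Real.sin θ : ℝ) : ℂ) *
            (Complex.exp (Complex.I * (-(m:ℂ)) * φ) * Complex.exp (Complex.I * (m':ℂ) * φ)) := by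
            push_cast
            ring
        _ = ((Wnat a c d θ * Wnat a' c' d' θ * Real.sin θ : ℝ) : ℂ)
            * Complex.exp (Complex.I * ((m' : ℂ) - (m : ℂ)) * φ) := by
            rw [← Complex.exp_add]
            congr 1
            ring
    rw [intervalIntegral.integral_congr (fun θ _ => h1 θ)]
    rw [intervalIntegral.integral_mul_const, intervalIntegral.integral_ofReal]
  rw [intervalIntegral.integral_congr (fun φ _ => hinner φ)]
  rw [intervalIntegral.integral_const_mul]
  by_cases hmm : m = m'
  · subst hmm
    have hexp : ∫ φ in (0:ℝ)..(2*Real.pi), Complex.exp (Complex.I * ((m : ℂ) - (m : ℂ)) * φ)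
        = ((2 * Real.pi : ℝ) : ℂ) := by
      have : ∀ φ : ℝ, Complex.exp (Complex.I * ((m : ℂ) - (m : ℂ)) * φ) = 1 := by
        intro φ
        rw [sub_self, mul_zero, zero_mul, Complex.exp_zero]
      rw [intervalIntegral.integral_congr (fun φ _ => this φ)]
      simp
    rw [hexp]
    by_cases hjj : j = j'
    · subst hjj
      rw [if_pos ⟨rfl, rfl⟩]
      rw [Kcalc a c d a c d rfl rfl, Vsum_diag]
      rw [← Complex.ofReal_mul, show (1 : ℂ) = ((1:ℝ):ℂ) by norm_num]
      congr 1
      calc Nc a c d * Nc a c d * (-1:ℝ)^(d+d) * (2 / ((c + d + 1).factorial : ℝ)) *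
            ((d.factorial : ℝ) * c.factorial * ((d + c).choose a)) * (2 * Real.pi)
          = (Nc a c d * Nc a c d * (-1:ℝ)^(d+d) * (2 / ((c + d + 1).factorial : ℝ)) *
            ((d.factorial : ℝ) * c.factorial * ((d + c).choose a))) * (2 * Real.pi) := by ring
        _ = 1 := K_diag_value a c d (by omega)
    · rw [if_neg (by tauto)]
      have hca : c + a' = c' + a := by omega
      have had : a + d' = a' + d := by omega
      rw [Kcalc a c d a' c' d' hca had]
      have hVz : Vsum a c d a' c' d' = 0 := by
        rcases lt_trichotomy a a' with h | h | h
        · exact Vsum_off a c d a' c' d' hca had h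
        · exfalso; omega
        · rw [Vsum_symm a c d a' c' d' hca had]
          exact Vsum_off a' c' d' a c d (by omega) (by omega) h
      rw [hVz]
      simp
  · rw [if_neg (by tauto)]
    have hc0 : (Complex.I * ((m' : ℂ) - (m : ℂ))) ≠ 0 := by
      apply mul_ne_zero Complex.I_ne_zero
      have : ((m' - m : ℤ) : ℂ) ≠ 0 := by
        exact_mod_cast sub_ne_zero.mpr (fun h => hmm h.symm)
      push_cast at this
      exact this
    rw [integral_exp_mul_complex hc0]
    have h2pi : Complex.exp (Complex.I * ((m' : ℂ) - (m : ℂ)) * ((2 * Real.pi : ℝ) : ℂ)) = 1 := by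
      have harg : Complex.I * ((m' : ℂ) - (m : ℂ)) * ((2 * Real.pi : ℝ) : ℂ)
          = ((m' - m : ℤ) : ℂ) * (2 * (Real.pi : ℂ) * Complex.I) := by
        push_cast
        ring
      rw [harg, Complex.exp_int_mul_two_pi_mul_I]
    rw [h2pi]
    simp
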